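/- Let V, W : ℝ≥0 → ℂ be differentiable solutions of the Riccati system dV/dt = −γV − γ|V + e^{2iθ(t)}W|², dW/dt = −(γ + 2iω)W − γ(e^{−iθ(t)}V + e^{iθ(t)}W)². If V(0) ∈ ℝ and V(0) ≥ 0, then V(t) is real for all t and V is monotonically non-increasing wherever V ≥ 0. -/

import Mathlib

open Complex

/-- Riccati equations of the quadrature filter: the conditional covariance
`V` stays real and is non-increasing wherever it is nonnegative. -/
theorem riccati_V_real_and_decreasing
    (γ ω : ℝ) (hγ : 0 < γ) (θ : ℝ → ℝ) (hθ : Continuous θ)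
    (V W : ℝ → ℂ)
    (hV : ∀ t, 0 ≤ t → HasDerivAt V
      (-(γ : ℂ) * V t
        - (γ : ℂ) * (‖V t + Complex.exp (2 * I * (θ t : ℂ)) * W t‖ : ℂ) ^ 2) t)
    (hW : ∀ t, 0 ≤ t → HasDerivAt W
      (-((γ : ℂ) + 2 * I * (ω : ℂ)) * W t
        - (γ : ℂ) * (Complex.exp (-I * (θ t : ℂ)) * V t
            + Complex.exp (I * (θ t : ℂ)) * W t) ^ 2) t)
    (hV0re : (V 0).im = 0) (hV0pos : 0 ≤ (V 0).re) :
    (∀ t, 0 ≤ t → (V t).im = 0) ∧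
    (∀ s t, 0 ≤ s → s ≤ t → (∀ u ∈ Set.Icc s t, 0 ≤ (V u).re) →
      (V t).re ≤ (V s).re) := by
  -- derivative of the imaginary part
  have hVim : ∀ u, 0 ≤ u → HasDerivAt (fun x => (V x).im) (-γ * (V u).im) u := by
    intro u hu
    have h := (Complex.imCLM.hasFDerivAt.comp_hasDerivAt u (hV u hu))
    simp only [Function.comp_def, Complex.imCLM_apply] at h
    have him : (-(γ : ℂ) * V u
        - (γ : ℂ) * (‖V u + Complex.exp (2 * I * (θ u : ℂ)) * W u‖ : ℂ) ^ 2).im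
        = -γ * (V u).im := by
      simp [Complex.sub_im, Complex.mul_im, Complex.neg_re, Complex.neg_im,
        ← Complex.ofReal_pow]
    rwa [him] at h
  -- derivative of the real part
  have hVre : ∀ u, 0 ≤ u → HasDerivAt (fun x => (V x).re)
      (-γ * (V u).re - γ * (‖V u + Complex.exp (2 * I * (θ u : ℂ)) * W u‖) ^ 2) u := by
    intro u hu
    have h := (Complex.reCLM.hasFDerivAt.comp_hasDerivAt u (hV u hu))
    simp only [Function.comp_def, Complex.reCLM_apply] at h
    have hre : (-(γ : ℂ) * V u
        - (γ : ℂ) * (‖V u + Complex.exp (2 * I * (θ u : ℂ)) * W u‖ : ℂ) ^ 2).re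
        = -γ * (V u).re - γ * (‖V u + Complex.exp (2 * I * (θ u : ℂ)) * W u‖) ^ 2 := by
      simp [Complex.sub_re, Complex.mul_re, Complex.neg_re, Complex.neg_im,
        ← Complex.ofReal_pow]
    rwa [hre] at h
  have himzero : ∀ t, 0 ≤ t → (V t).im = 0 := by
    intro t ht
    have key : ∀ x ∈ Set.Icc (0:ℝ) t,
        Real.exp (γ * x) * (V x).im = Real.exp (γ * 0) * (V 0).im := by
      apply constant_of_has_deriv_right_zero
      · apply ContinuousOn.mul
        · exact (Real.continuous_exp.comp (continuous_const.mul continuous_id)).continuousOn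
        · intro x hx
          exact ((hVim x hx.1).continuousAt).continuousWithinAt
      · intro x hx
        have hx0 : (0:ℝ) ≤ x := hx.1
        have h1 : HasDerivAt (fun u => Real.exp (γ * u)) (Real.exp (γ * x) * γ) x := by
          have h0 := (Real.hasDerivAt_exp (γ * x)).comp x
            ((hasDerivAt_id x).const_mul γ)
          simp only [mul_one] at h0
          exact h0
        have h2 := h1.mul (hVim x hx0)
        have h3 : HasDerivAt (fun u => Real.exp (γ * u) * (V u).im) 0 x := by
          exact h2.congr_deriv (by ring)
        exact h3.hasDerivWithinAt
    have hkey := key t ⟨ht, le_refl t⟩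
    rw [hV0re] at hkey
    simp only [mul_zero] at hkey
    rcases mul_eq_zero.mp hkey with h | h
    · exact absurd h (Real.exp_ne_zero _)
    · exact h
  refine ⟨himzero, ?_⟩
  intro s t hs hst hpos
  have hmono : AntitoneOn (fun u => (V u).re) (Set.Icc s t) := by
    apply antitoneOn_of_deriv_nonpos (convex_Icc s t)
    · intro x hx
      exact ((hVre x (hs.trans hx.1)).continuousAt).continuousWithinAt
    · intro x hx
      rw [interior_Icc] at hx
      exact ((hVre x (hs.trans hx.1.le)).differentiableAt).differentiableWithinAt
    · intro x hx
      rw [interior_Icc] at hx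
      have hx0 : 0 ≤ x := hs.trans hx.1.le
      have hxmem : x ∈ Set.Icc s t := ⟨hx.1.le, hx.2.le⟩
      rw [(hVre x hx0).deriv]
      have h1 : 0 ≤ (V x).re := hpos x hxmem
      have h2 : (0:ℝ) ≤ (‖V x + Complex.exp (2 * I * (θ x : ℂ)) * W x‖) ^ 2 :=
        sq_nonneg _
      nlinarith
  by_cases h : s = t
  · subst h; exact le_refl _
  · exact hmono ⟨le_refl s, hst⟩ ⟨hst, le_refl t⟩ hst
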